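/- For every invertible d×d matrix h over K there exists a unique R-algebra homomorphism σ_h : R^𝐝 → R^𝐝 such that for every f ∈ R, the power series Σ_i σ_h(f_i) t^i ∈ R^𝐝[[t^1,…,t^d]] equals the series obtained from I(f) = Σ_i f_i t^i by the substitution t^b ↦ Σ_a h^b_a t^a (the image of I(f) under the continuous R^𝐝-algebra substitution homomorphism determined by this assignment, which is well-defined since it preserves the order of power series). Moreover σ_{h·h'} = σ_h ∘ σ_{h'} for all h, h' ∈ GL_d(K) and σ_1 = id; in particular each σ_h is an automorphism, and h ↦ σ_h is a left action of GL_d(K) on R^𝐝 by R-algebra automorphisms. -/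

import Mathlib

set_option synthInstance.maxHeartbeats 1000000
set_option maxHeartbeats 1000000
set_option linter.unusedSectionVars false

namespace Paper

/-- Multi-indices: finitely supported functions `Fin d → ℕ`. -/
abbrev MIdx (d : ℕ) := Fin d →₀ ℕ

/-- The length `|i|` of a multi-index. -/
def deg {d : ℕ} (i : MIdx d) : ℕ := i.sum fun _ n => n

variable (K R : Type) [Field K] [CharZero K] [CommRing R] [Algebra K R]

/-- The defining relations of the algebra `R^𝐝`. -/
def relSet (d : ℕ) : Set (MvPolynomial (R × MIdx d) R) :=
  {p | (∃ f g : R, ∃ i : MIdx d,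
          p = MvPolynomial.X (f + g, i) - MvPolynomial.X (f, i) - MvPolynomial.X (g, i)) ∨
       (∃ f g : R, ∃ i : MIdx d,
          p = MvPolynomial.X (f * g, i) -
            ∑ q ∈ Finset.HasAntidiagonal.antidiagonal i, MvPolynomial.X (f, q.1) * MvPolynomial.X (g, q.2)) ∨
       (∃ f : R, p = MvPolynomial.X (f, (0 : MIdx d)) - MvPolynomial.C f) ∨
       (∃ (c : K) (i : MIdx d), 1 ≤ deg i ∧ p = MvPolynomial.X (algebraMap K R c, i))}

/-- The commutative `R`-algebra `R^𝐝` generated by the symbols `f_i`. -/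
def Rd (d : ℕ) : Type :=
  MvPolynomial (R × MIdx d) R ⧸ Ideal.span (relSet K R d)

noncomputable instance (d : ℕ) : CommRing (Rd K R d) := Ideal.Quotient.commRing _
noncomputable instance (d : ℕ) : Algebra R (Rd K R d) := Ideal.Quotient.algebra R
noncomputable instance (d : ℕ) : Algebra K (Rd K R d) := Ideal.Quotient.algebra K

/-- The generator `f_i` of `R^𝐝`. -/
noncomputable def gen {d : ℕ} (f : R) (i : MIdx d) : Rd K R d :=
  Ideal.Quotient.mk (Ideal.span (relSet K R d)) (MvPolynomial.X (f, i))

/-- The Taylor series `I(f) = Σ_i f_i t^i ∈ R^𝐝[[t^1,…,t^d]]`. -/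
noncomputable def Ifun {d : ℕ} (f : R) : MvPowerSeries (Fin d) (Rd K R d) :=
  fun i => gen K R f i

end Paper

namespace Paper

/-- substCoeff -/
noncomputable def substCoeff {K A : Type} [Field K] [CommRing A] {d : ℕ} (κ : K →+* A)
    (h : Matrix (Fin d) (Fin d) K) (F : MvPowerSeries (Fin d) A) (k : MIdx d) : A :=
  ∑ m ∈ Finset.finsuppAntidiag (Finset.univ : Finset (Fin d)) (deg k),
    MvPowerSeries.coeff m F *
      MvPolynomial.coeff k
        (∏ c : Fin d,
          (∑ a : Fin d, MvPolynomial.C (κ (h c a)) * MvPolynomial.X a) ^ (m c))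

end Paper

namespace Paper

open MvPolynomial

variable (K R : Type) [Field K] [CharZero K] [CommRing R] [Algebra K R] {d : ℕ}

/-- deg facts -/
lemma deg_eq_degree (i : MIdx d) : deg i = i.degree := rfl

lemma deg_eq_sum (i : MIdx d) : deg i = ∑ a : Fin d, i a :=
  Finsupp.sum_fintype _ _ (fun _ => rfl)

lemma deg_add (i j : MIdx d) : deg (i + j) = deg i + deg j := by
  simp [deg_eq_sum, Finset.sum_add_distrib]

lemma deg_zero : deg (0 : MIdx d) = 0 := by simp [deg_eq_sum]

lemma deg_eq_zero_iff (i : MIdx d) : deg i = 0 ↔ i = 0 := by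
  rw [deg_eq_degree, Finsupp.degree_eq_zero_iff]

/-- the antidiagonal index set -/
lemma mem_adiag (n : ℕ) (m : MIdx d) :
    m ∈ Finset.finsuppAntidiag (Finset.univ : Finset (Fin d)) n ↔ deg m = n := by
  rw [Finset.mem_finsuppAntidiag]
  constructor
  · rintro ⟨h1, -⟩; rw [deg_eq_sum]; exact h1
  · intro h1; exact ⟨by rw [deg_eq_sum] at h1; exact h1, Finset.subset_univ _⟩

/-- gen relations -/
lemma mk_rel_eq_zero {p : MvPolynomial (R × MIdx d) R} (hp : p ∈ relSet K R d) :
    Ideal.Quotient.mk (Ideal.span (relSet K R d)) p = 0 :=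
  Ideal.Quotient.eq_zero_iff_mem.mpr (Ideal.subset_span hp)

lemma gen_add (f g : R) (i : MIdx d) :
    gen K R (f + g) i = gen K R f i + gen K R g i := by
  have h := mk_rel_eq_zero K R (d := d) (Or.inl ⟨f, g, i, rfl⟩)
  rw [map_sub, map_sub, sub_sub, sub_eq_zero] at h
  exact h

lemma gen_mul (f g : R) (i : MIdx d) :
    gen K R (f * g) i = ∑ q ∈ Finset.HasAntidiagonal.antidiagonal i, gen K R f q.1 * gen K R g q.2 := by
  have h := mk_rel_eq_zero K R (d := d) (Or.inr (Or.inl ⟨f, g, i, rfl⟩))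
  rw [map_sub, sub_eq_zero] at h
  rw [gen, h, map_sum]
  simp only [map_mul, gen]
  rfl

lemma gen_zero (f : R) :
    gen K R f (0 : MIdx d) = algebraMap R (Rd K R d) f := by
  have h := mk_rel_eq_zero K R (d := d) (Or.inr (Or.inr (Or.inl ⟨f, rfl⟩)))
  rw [map_sub, sub_eq_zero] at h
  exact h

lemma gen_K (c : K) (i : MIdx d) (hi : 1 ≤ deg i) :
    gen K R (algebraMap K R c) i = 0 :=
  mk_rel_eq_zero K R (d := d) (Or.inr (Or.inr (Or.inr ⟨c, i, hi, rfl⟩)))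

end Paper

namespace Paper

open MvPolynomial

variable (K R : Type) [Field K] [CharZero K] [CommRing R] [Algebra K R] {d : ℕ}

/-- The coefficient ring hom `K → R^𝐝`. -/
noncomputable def kap (d : ℕ) : K →+* Rd K R d :=
  (algebraMap R (Rd K R d)).comp (algebraMap K R)

lemma kap_def (d : ℕ) :
    kap K R d = (algebraMap R (Rd K R d)).comp (algebraMap K R) := rfl

/-- The linear substitution polynomials over `R^𝐝`. -/
noncomputable def Lpoly (h : Matrix (Fin d) (Fin d) K) (b : Fin d) :
    MvPolynomial (Fin d) (Rd K R d) :=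
  ∑ a : Fin d, C (kap K R d (h b a)) * X a

/-- The substitution algebra endomorphism of `(R^𝐝)[X]`. -/
noncomputable def psi (h : Matrix (Fin d) (Fin d) K) :
    MvPolynomial (Fin d) (Rd K R d) →ₐ[Rd K R d] MvPolynomial (Fin d) (Rd K R d) :=
  aeval (Lpoly K R h)

lemma Lpoly_hom (h : Matrix (Fin d) (Fin d) K) (b : Fin d) :
    (Lpoly K R h b).IsHomogeneous 1 := by
  rw [Lpoly]
  exact IsHomogeneous.sum _ _ _ fun a _ => isHomogeneous_C_mul_X _ a

lemma psi_hom (h : Matrix (Fin d) (Fin d) K) {P : MvPolynomial (Fin d) (Rd K R d)} {n : ℕ}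
    (hP : P.IsHomogeneous n) : ((psi K R h) P).IsHomogeneous n := by
  have H : ((psi K R h) P).IsHomogeneous (1 * n) := hP.aeval _ (Lpoly_hom K R h)
  rwa [one_mul] at H

/-- Homogeneous truncations of `I(f)`. -/
noncomputable def Tp (f : R) (n : ℕ) : MvPolynomial (Fin d) (Rd K R d) :=
  ∑ m ∈ Finset.finsuppAntidiag (Finset.univ : Finset (Fin d)) n, monomial m (gen K R f m)

lemma coeff_Tp (f : R) (n : ℕ) (m : MIdx d) :
    coeff m (Tp K R f n) = if deg m = n then gen K R f m else 0 := by
  rw [Tp, coeff_sum]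
  simp only [coeff_monomial]
  rw [Finset.sum_ite_eq' (Finset.finsuppAntidiag (Finset.univ : Finset (Fin d)) n) m
    (fun m' => gen K R f m')]
  by_cases hm : deg m = n
  · rw [if_pos ((mem_adiag n m).mpr hm), if_pos hm]
  · rw [if_neg (fun hh => hm ((mem_adiag n m).mp hh)), if_neg hm]

lemma Tp_hom (f : R) (n : ℕ) : (Tp K R (d := d) f n).IsHomogeneous n := by
  rw [Tp]
  exact IsHomogeneous.sum _ _ _ fun m hm =>
    isHomogeneous_monomial _ (by rw [← deg_eq_degree]; exact (mem_adiag n m).mp hm)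

/-- The image of the generator under the substitution. -/
noncomputable def Sgen (h : Matrix (Fin d) (Fin d) K) (f : R) (k : MIdx d) : Rd K R d :=
  coeff k (psi K R h (Tp K R f (deg k)))

lemma coeff_psi_Tp (h : Matrix (Fin d) (Fin d) K) (f : R) {n : ℕ} {k : MIdx d}
    (hk : deg k ≠ n) : coeff k (psi K R h (Tp K R f n)) = 0 :=
  (psi_hom K R h (Tp_hom K R f n)).coeff_eq_zero (by rw [← deg_eq_degree]; exact hk)

lemma substCoeff_eq_Sgen (h : Matrix (Fin d) (Fin d) K) (f : R) (k : MIdx d) :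
    substCoeff ((algebraMap R (Rd K R d)).comp (algebraMap K R)) h (Ifun K R f) k
      = Sgen K R h f k := by
  rw [Sgen, Tp, map_sum, coeff_sum, substCoeff]
  refine Finset.sum_congr rfl fun m hm => ?_
  rw [psi, aeval_monomial, algebraMap_eq, coeff_C_mul,
      Finsupp.prod_fintype _ _ (fun a => pow_zero _)]
  simp only [Lpoly, kap]
  rfl

end Paper

namespace Paper

open MvPolynomial

variable (K R : Type) [Field K] [CharZero K] [CommRing R] [Algebra K R] {d : ℕ}

lemma Tp_add (f g : R) (n : ℕ) :
    Tp K R (d := d) (f + g) n = Tp K R f n + Tp K R g n := by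
  rw [Tp, Tp, Tp, ← Finset.sum_add_distrib]
  exact Finset.sum_congr rfl fun m _ => by rw [gen_add, map_add]

lemma Sgen_add (h : Matrix (Fin d) (Fin d) K) (f g : R) (k : MIdx d) :
    Sgen K R h (f + g) k = Sgen K R h f k + Sgen K R h g k := by
  rw [Sgen, Sgen, Sgen, Tp_add, map_add, coeff_add]

lemma Sgen_zero (h : Matrix (Fin d) (Fin d) K) (f : R) :
    Sgen K R h f (0 : MIdx d) = algebraMap R (Rd K R d) f := by
  have h0 : Tp K R (d := d) f (deg (0 : MIdx d)) = C (gen K R f 0) := by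
    rw [deg_zero, Tp]
    rw [show Finset.finsuppAntidiag (Finset.univ : Finset (Fin d)) 0 = {0} from ?_]
    · rw [Finset.sum_singleton, monomial_zero']
    · ext m
      rw [mem_adiag, Finset.mem_singleton, deg_eq_zero_iff]
  rw [Sgen, h0, psi, aeval_C, algebraMap_eq, coeff_zero_C, gen_zero]

lemma Sgen_K (h : Matrix (Fin d) (Fin d) K) (c : K) (k : MIdx d) (hk : 1 ≤ deg k) :
    Sgen K R h (algebraMap K R c) k = 0 := by
  have h0 : Tp K R (d := d) (algebraMap K R c) (deg k) = 0 := by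
    rw [Tp]
    refine Finset.sum_eq_zero fun m hm => ?_
    rw [gen_K K R c m (by rw [(mem_adiag (deg k) m).mp hm]; exact hk), map_zero]
  rw [Sgen, h0, map_zero, coeff_zero]

lemma sum_antidiag_ite {M : Type} [CommRing M] (n a b : ℕ) (x y : M) :
    (∑ p ∈ Finset.HasAntidiagonal.antidiagonal n,
      (if a = p.1 then x else 0) * (if b = p.2 then y else 0)) =
    if a + b = n then x * y else 0 := by
  have key : ∀ p : ℕ × ℕ,
      ((if a = p.1 then x else 0) * (if b = p.2 then y else 0)) =
      if (a, b) = p then x * y else 0 := by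
    rintro ⟨c, e⟩
    by_cases h1 : a = c <;> by_cases h2 : b = e <;>
      simp [h1, h2, Prod.ext_iff]
  rw [Finset.sum_congr rfl fun p _ => key p, Finset.sum_ite_eq]
  simp only [Finset.HasAntidiagonal.mem_antidiagonal]

lemma Tp_mul (f g : R) (n : ℕ) :
    Tp K R (d := d) (f * g) n =
      ∑ p ∈ Finset.HasAntidiagonal.antidiagonal n, Tp K R f p.1 * Tp K R g p.2 := by
  apply MvPolynomial.ext
  intro m
  rw [coeff_Tp, coeff_sum]
  simp only [coeff_mul, coeff_Tp]
  rw [Finset.sum_comm]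
  have step : ∀ uv ∈ Finset.HasAntidiagonal.antidiagonal m,
      (∑ p ∈ Finset.HasAntidiagonal.antidiagonal n,
        (if deg uv.1 = p.1 then gen K R f uv.1 else 0) *
        (if deg uv.2 = p.2 then gen K R g uv.2 else 0)) =
      (if deg m = n then gen K R f uv.1 * gen K R g uv.2 else 0) := by
    intro uv huv
    rw [Finset.HasAntidiagonal.mem_antidiagonal] at huv
    rw [sum_antidiag_ite]
    congr 1
    rw [← huv, deg_add]
  rw [Finset.sum_congr rfl step]
  by_cases hmn : deg m = n
  · rw [if_pos hmn, Finset.sum_congr rfl fun uv _ => if_pos hmn, gen_mul]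
  · rw [if_neg hmn, Finset.sum_congr rfl fun uv _ => if_neg hmn, Finset.sum_const_zero]

lemma Sgen_mul (h : Matrix (Fin d) (Fin d) K) (f g : R) (k : MIdx d) :
    Sgen K R h (f * g) k =
      ∑ p ∈ Finset.HasAntidiagonal.antidiagonal k, Sgen K R h f p.1 * Sgen K R h g p.2 := by
  have hdeg : ∀ pq : MIdx d × MIdx d, pq ∈ Finset.HasAntidiagonal.antidiagonal k →
      deg pq.1 + deg pq.2 = deg k := by
    intro pq hpq
    rw [Finset.HasAntidiagonal.mem_antidiagonal] at hpq
    rw [← deg_add, hpq]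
  rw [Sgen, Tp_mul, map_sum, coeff_sum]
  simp only [map_mul, coeff_mul]
  rw [Finset.sum_comm]
  refine Finset.sum_congr rfl fun pq hpq => ?_
  rw [Finset.sum_eq_single (deg pq.1, deg pq.2)]
  · rfl
  · intro b hb hne
    rw [Finset.HasAntidiagonal.mem_antidiagonal] at hb
    by_cases h1 : deg pq.1 = b.1
    · have h2 : deg pq.2 ≠ b.2 := by
        intro h2
        exact hne (Prod.ext_iff.mpr ⟨h1.symm, h2.symm⟩)
      rw [coeff_psi_Tp K R h g h2, mul_zero]
    · rw [coeff_psi_Tp K R h f h1, zero_mul]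
  · intro habs
    exact absurd (Finset.HasAntidiagonal.mem_antidiagonal.mpr (hdeg pq hpq)) habs

end Paper

namespace Paper

open MvPolynomial

variable (K R : Type) [Field K] [CharZero K] [CommRing R] [Algebra K R] {d : ℕ}

/-- The substitution homomorphism on the polynomial algebra. -/
noncomputable def phi (h : Matrix (Fin d) (Fin d) K) :
    MvPolynomial (R × MIdx d) R →ₐ[R] Rd K R d :=
  aeval (fun p => Sgen K R h p.1 p.2)

lemma phi_vanish (h : Matrix (Fin d) (Fin d) K) :
    ∀ a ∈ Ideal.span (relSet K R d), phi K R h a = 0 := by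
  have hker : Ideal.span (relSet K R d) ≤ RingHom.ker (phi K R h) := by
    rw [Ideal.span_le]
    rintro p (⟨f, g, i, rfl⟩ | ⟨f, g, i, rfl⟩ | ⟨f, rfl⟩ | ⟨c, i, hi, rfl⟩) <;>
      rw [SetLike.mem_coe, RingHom.mem_ker]
    · simp only [map_sub, phi, aeval_X]
      rw [Sgen_add]; ring
    · simp only [map_sub, map_sum, map_mul, phi, aeval_X]
      rw [Sgen_mul]; ring
    · simp only [map_sub, phi, aeval_X, aeval_C]
      rw [Sgen_zero]; ring
    · simp only [phi, aeval_X]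
      exact Sgen_K K R h c i hi
  exact fun a ha => hker ha

/-- The substitution homomorphism `σ_h` on `R^𝐝`. -/
noncomputable def sig (h : Matrix (Fin d) (Fin d) K) : Rd K R d →ₐ[R] Rd K R d :=
  Ideal.Quotient.liftₐ (Ideal.span (relSet K R d)) (phi K R h) (phi_vanish K R h)

lemma sig_gen (h : Matrix (Fin d) (Fin d) K) (f : R) (k : MIdx d) :
    sig K R h (gen K R f k) = Sgen K R h f k := by
  have h1 := AlgHom.congr_fun (Ideal.Quotient.liftₐ_comp (Ideal.span (relSet K R d))
    (phi K R h) (phi_vanish K R h)) (X (f, k))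
  simp only [AlgHom.comp_apply, Ideal.Quotient.mkₐ_eq_mk] at h1
  rw [sig, gen]
  exact h1.trans (aeval_X _ _)

lemma hom_ext {τ τ' : Rd K R d →ₐ[R] Rd K R d}
    (H : ∀ (f : R) (k : MIdx d), τ (gen K R f k) = τ' (gen K R f k)) : τ = τ' := by
  have h2 : τ.comp (Ideal.Quotient.mkₐ R (Ideal.span (relSet K R d))) =
      τ'.comp (Ideal.Quotient.mkₐ R (Ideal.span (relSet K R d))) :=
    MvPolynomial.algHom_ext fun p => by
      exact H p.1 p.2
  ext x
  obtain ⟨y, rfl⟩ := Ideal.Quotient.mkₐ_surjective R (Ideal.span (relSet K R d)) x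
  exact AlgHom.congr_fun h2 y

end Paper

namespace Paper

open MvPolynomial

variable (K R : Type) [Field K] [CharZero K] [CommRing R] [Algebra K R] {d : ℕ}

/-- The linear substitution polynomials over `K`. -/
noncomputable def LK (h : Matrix (Fin d) (Fin d) K) (b : Fin d) : MvPolynomial (Fin d) K :=
  ∑ a : Fin d, C (h b a) * X a

/-- The substitution algebra endomorphism of `K[X]`. -/
noncomputable def psiK (h : Matrix (Fin d) (Fin d) K) :
    MvPolynomial (Fin d) K →ₐ[K] MvPolynomial (Fin d) K :=
  aeval (LK K h)

/-- The structure constants of the substitution. -/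
noncomputable def cc (h : Matrix (Fin d) (Fin d) K) (m k : MIdx d) : K :=
  coeff k (psiK K h (monomial m 1))

lemma LK_hom (h : Matrix (Fin d) (Fin d) K) (b : Fin d) : (LK K h b).IsHomogeneous 1 := by
  rw [LK]
  exact IsHomogeneous.sum _ _ _ fun a _ => isHomogeneous_C_mul_X _ a

lemma psiK_hom (h : Matrix (Fin d) (Fin d) K) {P : MvPolynomial (Fin d) K} {n : ℕ}
    (hP : P.IsHomogeneous n) : ((psiK K h) P).IsHomogeneous n := by
  have H : ((psiK K h) P).IsHomogeneous (1 * n) := hP.aeval _ (LK_hom K h)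
  rwa [one_mul] at H

lemma psiK_monomial_one (h : Matrix (Fin d) (Fin d) K) (m : MIdx d) :
    psiK K h (monomial m 1) = ∏ a : Fin d, LK K h a ^ m a := by
  rw [psiK, aeval_monomial, map_one, one_mul,
    Finsupp.prod_fintype _ _ (fun a => pow_zero _)]

lemma Lpoly_eq_map (h : Matrix (Fin d) (Fin d) K) (b : Fin d) :
    Lpoly K R h b = MvPolynomial.map (kap K R d) (LK K h b) := by
  rw [Lpoly, LK, map_sum]
  exact Finset.sum_congr rfl fun a _ => by rw [map_mul, map_C, map_X]

lemma coeff_prodL (h : Matrix (Fin d) (Fin d) K) (m k : MIdx d) :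
    coeff k (∏ a : Fin d, Lpoly K R h a ^ m a) = kap K R d (cc K h m k) := by
  have : (∏ a : Fin d, Lpoly K R h a ^ m a) =
      MvPolynomial.map (kap K R d) (∏ a : Fin d, LK K h a ^ m a) := by
    rw [map_prod]
    exact Finset.prod_congr rfl fun a _ => by rw [Lpoly_eq_map, map_pow]
  rw [this, coeff_map, cc, psiK_monomial_one]

/-- Expansion of `Sgen` in terms of generators and structure constants. -/
lemma Sgen_expand (h : Matrix (Fin d) (Fin d) K) (f : R) (k : MIdx d) :
    Sgen K R h f k =
      ∑ m ∈ Finset.finsuppAntidiag (Finset.univ : Finset (Fin d)) (deg k),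
        gen K R f m * kap K R d (cc K h m k) := by
  rw [Sgen, Tp, map_sum, coeff_sum]
  refine Finset.sum_congr rfl fun m hm => ?_
  rw [psi, aeval_monomial, algebraMap_eq, coeff_C_mul,
    Finsupp.prod_fintype _ _ (fun a => pow_zero _), coeff_prodL]

lemma psiK_comp (h h' : Matrix (Fin d) (Fin d) K) :
    (psiK K h').comp (psiK K h) = psiK K (h * h') := by
  apply MvPolynomial.algHom_ext
  intro b
  simp only [AlgHom.comp_apply, psiK, aeval_X]
  rw [LK, map_sum]
  simp only [map_mul, aeval_X, aeval_C, MvPolynomial.algebraMap_eq]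
  rw [show (∑ a : Fin d, C (h b a) * LK K h' a) =
      ∑ a : Fin d, ∑ c : Fin d, C (h b a * h' a c) * X c from
    Finset.sum_congr rfl fun a _ => by
      rw [LK, Finset.mul_sum]
      exact Finset.sum_congr rfl fun c _ => by rw [← mul_assoc, ← C_mul]]
  rw [Finset.sum_comm, LK]
  refine Finset.sum_congr rfl fun c _ => ?_
  rw [← Finset.sum_mul, ← map_sum, Matrix.mul_apply]

lemma hom_expand {P : MvPolynomial (Fin d) K} {n : ℕ} (hP : P.IsHomogeneous n) :
    P = ∑ m ∈ Finset.finsuppAntidiag (Finset.univ : Finset (Fin d)) n,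
        monomial m (coeff m P) := by
  apply MvPolynomial.ext
  intro j
  rw [coeff_sum]
  simp only [coeff_monomial]
  rw [Finset.sum_ite_eq' (Finset.finsuppAntidiag (Finset.univ : Finset (Fin d)) n) j
    (fun m => coeff m P)]
  by_cases hj : deg j = n
  · rw [if_pos ((mem_adiag n j).mpr hj)]
  · rw [if_neg (fun hh => hj ((mem_adiag n j).mp hh)),
      hP.coeff_eq_zero (by rw [← deg_eq_degree]; exact hj)]

lemma coeff_psiK (h' : Matrix (Fin d) (Fin d) K) {P : MvPolynomial (Fin d) K} {n : ℕ}
    (hP : P.IsHomogeneous n) (k : MIdx d) :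
    coeff k (psiK K h' P) =
      ∑ m ∈ Finset.finsuppAntidiag (Finset.univ : Finset (Fin d)) n,
        coeff m P * cc K h' m k := by
  conv_lhs => rw [hom_expand K hP]
  rw [map_sum, coeff_sum]
  refine Finset.sum_congr rfl fun m hm => ?_
  have hmono : (monomial m) (coeff m P) = C (coeff m P) * monomial m 1 := by
    rw [C_mul_monomial, mul_one]
  have hC : psiK K h' (C (coeff m P)) = C (coeff m P) := by
    rw [psiK, aeval_C, MvPolynomial.algebraMap_eq]
  rw [hmono, map_mul, hC, coeff_C_mul, cc]

lemma cc_comp (h h' : Matrix (Fin d) (Fin d) K) (u k : MIdx d) (hu : deg u = deg k) :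
    cc K (h * h') u k =
      ∑ m ∈ Finset.finsuppAntidiag (Finset.univ : Finset (Fin d)) (deg k),
        cc K h u m * cc K h' m k := by
  have key := AlgHom.congr_fun (psiK_comp K h h') (monomial u 1)
  have hhom : ((psiK K h) (monomial u (1 : K))).IsHomogeneous (deg k) :=
    psiK_hom K h (isHomogeneous_monomial _ (by rw [← deg_eq_degree]; exact hu))
  rw [cc, ← key, AlgHom.comp_apply, coeff_psiK K h' hhom k]
  exact Finset.sum_congr rfl fun m hm => rfl

end Paper

namespace Paper

open MvPolynomial

variable (K R : Type) [Field K] [CharZero K] [CommRing R] [Algebra K R] {d : ℕ}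

lemma sig_kap (h : Matrix (Fin d) (Fin d) K) (x : K) :
    sig K R h (kap K R d x) = kap K R d x :=
  (sig K R h).commutes (algebraMap K R x)

lemma sig_comp (h h' : Matrix (Fin d) (Fin d) K) :
    sig K R (h * h') = (sig K R h).comp (sig K R h') := by
  apply hom_ext
  intro f k
  rw [AlgHom.comp_apply, sig_gen, sig_gen, Sgen_expand K R h' f k, map_sum]
  have step1 : ∀ m ∈ Finset.finsuppAntidiag (Finset.univ : Finset (Fin d)) (deg k),
      sig K R h (gen K R f m * kap K R d (cc K h' m k)) =
      (∑ u ∈ Finset.finsuppAntidiag (Finset.univ : Finset (Fin d)) (deg k),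
        gen K R f u * kap K R d (cc K h u m)) * kap K R d (cc K h' m k) := by
    intro m hm
    rw [map_mul, sig_gen, sig_kap, Sgen_expand, (mem_adiag _ m).mp hm]
  rw [Finset.sum_congr rfl step1]
  refine Eq.trans ?_ (Finset.sum_congr rfl fun m _ => (Finset.sum_mul _ _ _).symm)
  refine Eq.trans ?_ Finset.sum_comm
  rw [Sgen_expand]
  refine Finset.sum_congr rfl fun u hu => ?_
  rw [cc_comp K h h' u k ((mem_adiag _ u).mp hu), map_sum]
  refine (Finset.mul_sum _ _ _).trans ?_
  refine Finset.sum_congr rfl fun m hm => ?_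
  rw [map_mul]; ring

lemma Lpoly_one (b : Fin d) :
    Lpoly K R (1 : Matrix (Fin d) (Fin d) K) b = X b := by
  rw [Lpoly, Finset.sum_eq_single b]
  · rw [Matrix.one_apply_eq, map_one, map_one, one_mul]
  · intro a _ hab
    rw [Matrix.one_apply_ne (Ne.symm hab), map_zero, map_zero, zero_mul]
  · intro hb; exact absurd (Finset.mem_univ b) hb

lemma sig_one : sig K R (1 : Matrix (Fin d) (Fin d) K) = AlgHom.id R (Rd K R d) := by
  apply hom_ext
  intro f k
  rw [sig_gen, AlgHom.id_apply, Sgen]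
  have hL : Lpoly K R (1 : Matrix (Fin d) (Fin d) K) = (X : Fin d → _) :=
    funext (Lpoly_one K R)
  rw [psi, hL, aeval_X_left, AlgHom.id_apply, coeff_Tp, if_pos rfl]

end Paper


/-- For every `h ∈ GL_d(K)` there is a unique `R`-algebra
homomorphism `σ_h : R^𝐝 → R^𝐝` with `Σ_i σ_h(f_i)t^i = I(f)(h·t)`; moreover
`h ↦ σ_h` is a left action of `GL_d(K)` on `R^𝐝` by `R`-algebra automorphisms. -/
theorem statement3 (K R : Type) [Field K] [CharZero K] [CommRing R] [Algebra K R]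
    (d : ℕ) (hd : 1 ≤ d) :
    ∃ σ : (Matrix (Fin d) (Fin d) K)ˣ → (Paper.Rd K R d →ₐ[R] Paper.Rd K R d),
      (∀ (h : (Matrix (Fin d) (Fin d) K)ˣ) (f : R) (k : Paper.MIdx d),
          σ h (Paper.gen K R f k) =
            Paper.substCoeff ((algebraMap R (Paper.Rd K R d)).comp (algebraMap K R))
              h.val (Paper.Ifun K R f) k) ∧
      (∀ (h : (Matrix (Fin d) (Fin d) K)ˣ) (τ : Paper.Rd K R d →ₐ[R] Paper.Rd K R d),
          (∀ (f : R) (k : Paper.MIdx d),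
            τ (Paper.gen K R f k) =
              Paper.substCoeff ((algebraMap R (Paper.Rd K R d)).comp (algebraMap K R))
                h.val (Paper.Ifun K R f) k) → τ = σ h) ∧
      (∀ h h' : (Matrix (Fin d) (Fin d) K)ˣ, σ (h * h') = (σ h).comp (σ h')) ∧
      (σ 1 = AlgHom.id R (Paper.Rd K R d)) ∧
      (∀ h, Function.Bijective (σ h)) := by
  refine ⟨fun h => Paper.sig K R h.val, ?_, ?_, ?_, ?_, ?_⟩
  · intro h f k
    rw [Paper.sig_gen, Paper.substCoeff_eq_Sgen]
  · intro h τ hτ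
    apply Paper.hom_ext
    intro f k
    rw [hτ f k, Paper.substCoeff_eq_Sgen, Paper.sig_gen]
  · intro h h'
    show Paper.sig K R (h * h').val = (Paper.sig K R h.val).comp (Paper.sig K R h'.val)
    rw [Units.val_mul]
    exact Paper.sig_comp K R h.val h'.val
  · show Paper.sig K R (1 : (Matrix (Fin d) (Fin d) K)ˣ).val = AlgHom.id R (Paper.Rd K R d)
    rw [Units.val_one]
    exact Paper.sig_one K R
  · intro h
    have e1 : (Paper.sig K R (h⁻¹).val).comp (Paper.sig K R h.val) =
        AlgHom.id R (Paper.Rd K R d) := by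
      rw [← Paper.sig_comp, ← Units.val_mul, inv_mul_cancel, Units.val_one, Paper.sig_one]
    have e2 : (Paper.sig K R h.val).comp (Paper.sig K R (h⁻¹).val) =
        AlgHom.id R (Paper.Rd K R d) := by
      rw [← Paper.sig_comp, ← Units.val_mul, mul_inv_cancel, Units.val_one, Paper.sig_one]
    exact Function.bijective_iff_has_inverse.mpr
      ⟨Paper.sig K R (h⁻¹).val,
       fun x => by simpa using AlgHom.congr_fun e1 x,
       fun x => by simpa using AlgHom.congr_fun e2 x⟩
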